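/- For every integer m ≥ 2, let P be the set of prime numbers p with p ≤ m and let n = Σ_{p ∈ P} (p + 1). Then there exist a connected finite simple graph G on n vertices, a maximum delay vector dt (not necessarily constant), and a configuration y of the conjunctive network with firing memory associated to G and dt such that y is periodic and its minimal period is at least Π_{p ∈ P} p. -/

import Mathlib

open Classical in
/-- The conjunctive network on a finite simple graph `G`:
`F(x)_i = ⋀_{j adjacent to i} x_j`. -/
noncomputable def conjNet {V : Type*} [Fintype V] (G : SimpleGraph V)
    (x : V → Bool) : V → Bool :=
  fun i => if ∀ j, G.Adj i j → x j = true then true else false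

/-- One step of the conjunctive network with firing memory on `G` with
maximum delays `dt`.  A configuration assigns to each node a pair
`(xᵢ, Δᵢ)` of a Boolean state and a delay. -/
noncomputable def fmStep {V : Type*} [Fintype V] (G : SimpleGraph V) (dt : V → ℕ)
    (y : V → Bool × ℕ) : V → Bool × ℕ :=
  fun i =>
    let f := conjNet G (fun j => (y j).1) i
    let d : ℕ := if f = true then dt i else (y i).2 - 1
    (if 1 ≤ d then true else f, d)

namespace CPPaux

lemma conjNet_eq_true_iff {V : Type*} [Fintype V] (G : SimpleGraph V)
    (x : V → Bool) (i : V) :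
    conjNet G x i = true ↔ ∀ j, G.Adj i j → x j = true := by
  classical
  unfold conjNet
  by_cases h : ∀ j, G.Adj i j → x j = true <;> simp [h]

lemma fmStep_apply {V : Type*} [Fintype V] (G : SimpleGraph V) (dt : V → ℕ)
    (y : V → Bool × ℕ) (i : V) :
    fmStep G dt y i =
      ((if 1 ≤ (if conjNet G (fun j => (y j).1) i = true then dt i else (y i).2 - 1)
         then true else conjNet G (fun j => (y j).1) i),
       (if conjNet G (fun j => (y j).1) i = true then dt i else (y i).2 - 1)) := rfl

/-- The delay value at time `t` of vertex `j` in the block of prime `p`. -/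
def delta (p j t : ℕ) : ℕ :=
  if j = 0 then (if t % p = 1 then p - 1 else p) else (j - 1 + (p - 1) * t) % p

lemma delta_pendant (p t : ℕ) : delta p 0 t = if t % p = 1 then p - 1 else p := by
  simp [delta]

lemma delta_clique {j : ℕ} (hj : j ≠ 0) (p t : ℕ) :
    delta p j t = (j - 1 + (p - 1) * t) % p := by
  simp [delta, hj]

lemma delta_pendant_pos {p : ℕ} (hp2 : 2 ≤ p) (t : ℕ) : 1 ≤ delta p 0 t := by
  rw [delta_pendant]; split <;> omega

lemma delta_clique_lt {p j : ℕ} (hp2 : 2 ≤ p) (hj : j ≠ 0) (t : ℕ) :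
    delta p j t < p := by
  rw [delta_clique hj]; exact Nat.mod_lt _ (by omega)

lemma delta_clique_succ {p j t : ℕ} (hp2 : 2 ≤ p) (hj : j ≠ 0) :
    delta p j (t + 1) = (delta p j t + (p - 1)) % p := by
  rw [delta_clique hj, delta_clique hj]
  conv_lhs => rw [Nat.mul_succ, ← Nat.add_assoc, Nat.add_mod]
  rw [Nat.mod_eq_of_lt (show p - 1 < p by omega)]

lemma succ_mod_eq_one_iff {p t : ℕ} (hp2 : 2 ≤ p) : (t + 1) % p = 1 ↔ t % p = 0 := by
  have h := Nat.add_mod t 1 p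
  have h1 : 1 % p = 1 := Nat.mod_eq_of_lt (by omega)
  rw [h1] at h
  have hr : t % p < p := Nat.mod_lt _ (by omega)
  by_cases hc : t % p + 1 = p
  · rw [h, hc, Nat.mod_self]; omega
  · rw [h, Nat.mod_eq_of_lt (by omega)]; omega

lemma modeq_zero_cancel {p a b : ℕ} (ha : a < p) (hb : b < p) (A : ℕ)
    (h1 : (a + A) % p = 0) (h2 : (b + A) % p = 0) : a = b := by
  have h : a + A ≡ b + A [MOD p] := by
    show (a + A) % p = (b + A) % p
    rw [h1, h2]
  have h' : a % p = b % p := Nat.ModEq.add_right_cancel' A h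
  rwa [Nat.mod_eq_of_lt ha, Nat.mod_eq_of_lt hb] at h'

lemma hole_exists {p : ℕ} (hp2 : 2 ≤ p) (t : ℕ) :
    (t % p + (p - 1) * t) % p = 0 := by
  have h1 : t % p + (p - 1) * t ≡ t + (p - 1) * t [MOD p] :=
    (Nat.mod_modEq t p).add_right _
  have h2 : t + (p - 1) * t = p * t := by
    have h3 : 1 + (p - 1) = p := by omega
    calc t + (p - 1) * t = (1 + (p - 1)) * t := by ring
    _ = p * t := by rw [h3]
  have h4 : (t % p + (p - 1) * t) % p = (t + (p - 1) * t) % p := h1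
  rw [h4, h2, Nat.mul_mod_right]

lemma prime_dvd_of_mul_pred {p T : ℕ} (hp : p.Prime) (h : ((p - 1) * T) % p = 0) :
    p ∣ T := by
  have hp2 : 2 ≤ p := hp.two_le
  have hd : p ∣ (p - 1) * T := Nat.dvd_of_mod_eq_zero h
  rcases (Nat.Prime.dvd_mul hp).mp hd with h1 | h2
  · exfalso
    have := Nat.le_of_dvd (by omega) h1
    omega
  · exact h2

variable (P : Finset ℕ)

/-- Vertex type: for each `p ∈ P` a block of `p + 1` vertices. -/
abbrev VT := Σ p : {x // x ∈ P}, Fin (p.1 + 1)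

/-- The graph: inside each block, vertex 0 (pendant) is joined to vertex 1 and
vertices `1, …, p` form a clique; across blocks, pendants are joined. -/
def GV : SimpleGraph (VT P) where
  Adj u v := u ≠ v ∧
    ((u.1 = v.1 ∧ (u.2.1 + v.2.1 = 1 ∨ (u.2.1 ≠ 0 ∧ v.2.1 ≠ 0))) ∨
      (u.1 ≠ v.1 ∧ u.2.1 = 0 ∧ v.2.1 = 0))
  symm := by
    constructor
    rintro u v ⟨h1, h2⟩
    refine ⟨Ne.symm h1, ?_⟩
    rcases h2 with ⟨he, h3 | h4⟩ | ⟨hne, h5, h6⟩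
    · exact Or.inl ⟨he.symm, Or.inl (by omega)⟩
    · exact Or.inl ⟨he.symm, Or.inr ⟨h4.2, h4.1⟩⟩
    · exact Or.inr ⟨Ne.symm hne, h6, h5⟩
  loopless := by constructor; rintro u ⟨h, -⟩; exact h rfl

lemma adj_iff (u v : VT P) : (GV P).Adj u v ↔ (u ≠ v ∧
    ((u.1 = v.1 ∧ (u.2.1 + v.2.1 = 1 ∨ (u.2.1 ≠ 0 ∧ v.2.1 ≠ 0))) ∨
      (u.1 ≠ v.1 ∧ u.2.1 = 0 ∧ v.2.1 = 0))) := Iff.rfl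

def dtV : VT P → ℕ := fun u => if u.2.1 = 0 then u.1.1 else u.1.1 - 1

/-- The configuration at time `t`. -/
def YV (t : ℕ) : VT P → Bool × ℕ :=
  fun u => (decide (1 ≤ delta u.1.1 u.2.1 t), delta u.1.1 u.2.1 t)

variable {P}

lemma sigma_eq_of {pq : {x // x ∈ P}} {a b : Fin (pq.1 + 1)}
    (h : a.1 = b.1) : (⟨pq, a⟩ : VT P) = ⟨pq, b⟩ := by
  congr 1
  exact Fin.ext h

lemma sigma_snd_eq {pq : {x // x ∈ P}} {a b : Fin (pq.1 + 1)}
    (h : (⟨pq, a⟩ : VT P) = ⟨pq, b⟩) : a.1 = b.1 := by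
  have := (Sigma.mk.inj_iff.mp h).2
  rw [heq_iff_eq] at this
  rw [this]

section step

variable (hP : ∀ p ∈ P, Nat.Prime p)
include hP

/-- The key step lemma: `fmStep` maps the configuration at time `t` to the
configuration at time `t+1`. -/
lemma step_eq (t : ℕ) : fmStep (GV P) (dtV P) (YV P t) = YV P (t + 1) := by
  classical
  funext u
  obtain ⟨⟨p, hpP⟩, j⟩ := u
  have hp : p.Prime := hP p hpP
  have hp2 : 2 ≤ p := hp.two_le
  rw [fmStep_apply]
  set F := conjNet (GV P) (fun w => (YV P t w).1) (⟨⟨p, hpP⟩, j⟩ : VT P) with hFdef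
  have hY2 : (YV P t (⟨⟨p, hpP⟩, j⟩ : VT P)).2 = delta p j.1 t := rfl
  have hgoal : YV P (t + 1) (⟨⟨p, hpP⟩, j⟩ : VT P) =
      (decide (1 ≤ delta p j.1 (t + 1)), delta p j.1 (t + 1)) := rfl
  rw [hY2, hgoal]
  by_cases hj : j.1 = 0
  -- ===== pendant case =====
  · have hdt : dtV P (⟨⟨p, hpP⟩, j⟩ : VT P) = p := by
      show (if j.1 = 0 then p else p - 1) = p
      rw [if_pos hj]
    have hF : F = true ↔ t % p ≠ 0 := by
      rw [hFdef, conjNet_eq_true_iff]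
      constructor
      · intro h ht0
        have hone : (1 : ℕ) < p + 1 := by omega
        have hadj : (GV P).Adj ⟨⟨p, hpP⟩, j⟩ ⟨⟨p, hpP⟩, ⟨1, hone⟩⟩ := by
          rw [adj_iff]
          refine ⟨fun he => ?_, Or.inl ⟨rfl, Or.inl (show j.1 + 1 = 1 by omega)⟩⟩
          · have h1 : j.1 = 1 := sigma_snd_eq he
            omega
        have hxw : decide (1 ≤ delta p 1 t) = true := h _ hadj
        have hdel : delta p 1 t = ((p - 1) * t) % p := by
          rw [delta_clique one_ne_zero]
          norm_num
        obtain ⟨c, hc⟩ := Nat.dvd_of_mod_eq_zero ht0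
        have hzero : ((p - 1) * t) % p = 0 := by
          rw [hc, show (p - 1) * (p * c) = p * ((p - 1) * c) by ring, Nat.mul_mod_right]
        rw [hdel, hzero] at hxw
        simp at hxw
      · intro ht0 w hadj
        obtain ⟨q, k⟩ := w
        show decide (1 ≤ delta q.1 k.1 t) = true
        rw [adj_iff] at hadj
        obtain ⟨hne, hcase⟩ := hadj
        rcases hcase with ⟨heq, hcond⟩ | ⟨hne1, h0, h0'⟩
        · -- same block: the only neighbour is vertex 1
          have hq : (⟨p, hpP⟩ : {x // x ∈ P}) = q := heq
          have hk1 : k.1 = 1 := by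
            rcases hcond with h1 | h2
            · have h1' : j.1 + k.1 = 1 := h1
              omega
            · exact absurd hj (h2.1)
          have hqv : q.1 = p := by rw [← hq]
          have hnz : ((p - 1) * t) % p ≠ 0 := by
            intro h0
            obtain ⟨c, hc⟩ := prime_dvd_of_mul_pred hp h0
            exact ht0 (by rw [hc, Nat.mul_mod_right])
          rw [hk1, hqv, delta_clique one_ne_zero]
          norm_num
          omega
        · -- cross block: pendant of another block, always true
          have hq : q.1.Prime := hP q.1 q.2
          have hq2 : 2 ≤ q.1 := hq.two_le
          have h0'' : k.1 = 0 := h0'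
          rw [h0'']
          simp [delta_pendant_pos hq2 t]
    -- now compute the step for the pendant
    have hdelt : delta p j.1 t = delta p 0 t := by rw [hj]
    have hdelt1 : delta p j.1 (t + 1) = delta p 0 (t + 1) := by rw [hj]
    rw [hdelt, hdelt1, hdt]
    by_cases ht : t % p = 0
    · have hFf : F = false := Bool.eq_false_iff.mpr (fun h => (hF.mp h) ht)
      have hd0 : delta p 0 t = p := by
        rw [delta_pendant, if_neg (by omega)]
      have hd1 : delta p 0 (t + 1) = p - 1 := by
        rw [delta_pendant, if_pos ((succ_mod_eq_one_iff hp2).mpr ht)]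
      rw [hFf, hd0, hd1]
      simp [show 1 ≤ p - 1 by omega]
    · have hFt : F = true := hF.mpr ht
      have hd1 : delta p 0 (t + 1) = p := by
        rw [delta_pendant, if_neg (fun hh => ht ((succ_mod_eq_one_iff hp2).mp hh))]
      rw [hFt, hd1]
      simp [show 1 ≤ p by omega]
  -- ===== clique case =====
  · have hdt : dtV P (⟨⟨p, hpP⟩, j⟩ : VT P) = p - 1 := by
      show (if j.1 = 0 then p else p - 1) = p - 1
      rw [if_neg hj]
    have hjb : j.1 < p + 1 := j.2
    have hjlt : j.1 - 1 < p := by omega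
    have hF : F = true ↔ delta p j.1 t = 0 := by
      rw [hFdef, conjNet_eq_true_iff]
      constructor
      · intro h
        by_contra hD
        set k0 : ℕ := t % p + 1 with hk0
        have hk0lt : k0 < p + 1 := by
          have : t % p < p := Nat.mod_lt _ (by omega)
          omega
        have hhole : delta p k0 t = 0 := by
          rw [delta_clique (show k0 ≠ 0 by omega)]
          have he1 : k0 - 1 = t % p := by omega
          rw [he1]
          exact hole_exists hp2 t
        have hkj : k0 ≠ j.1 := by
          intro he
          apply hD
          rw [delta_clique hj, ← he, ← delta_clique (show k0 ≠ 0 by omega)]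
          exact hhole
        have hadj : (GV P).Adj ⟨⟨p, hpP⟩, j⟩ ⟨⟨p, hpP⟩, ⟨k0, hk0lt⟩⟩ := by
          rw [adj_iff]
          refine ⟨fun he => ?_, Or.inl ⟨rfl, Or.inr ⟨hj, show k0 ≠ 0 by omega⟩⟩⟩
          · have h1 : j.1 = k0 := sigma_snd_eq he
            omega
        have hxw : decide (1 ≤ delta p k0 t) = true := h _ hadj
        rw [hhole] at hxw
        simp at hxw
      · intro hD w hadj
        obtain ⟨q, k⟩ := w
        show decide (1 ≤ delta q.1 k.1 t) = true
        rw [adj_iff] at hadj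
        obtain ⟨hne, hcase⟩ := hadj
        rcases hcase with ⟨heq, hcond⟩ | ⟨hne1, h0, h0'⟩
        · have hq : (⟨p, hpP⟩ : {x // x ∈ P}) = q := heq
          subst hq
          rcases hcond with h1 | h2
          · -- j = 1 and k = 0 : the pendant, always true
            have h1' : j.1 + k.1 = 1 := h1
            have hk0 : k.1 = 0 := by omega
            rw [hk0]
            simp [delta_pendant_pos hp2 t]
          · -- another clique vertex: it is not the hole
            have hknz : k.1 ≠ 0 := h2.2
            have hkj : k.1 ≠ j.1 := by
              intro he
              exact hne (sigma_eq_of (a := j) (b := k) he.symm)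
            have hnz : delta p k.1 t ≠ 0 := by
              intro h0
              rw [delta_clique hknz] at h0
              have hD' : (j.1 - 1 + (p - 1) * t) % p = 0 := by
                rw [← delta_clique hj]; exact hD
              have hkb : k.1 < p + 1 := k.2
              have hklt : k.1 - 1 < p := by omega
              have := modeq_zero_cancel hklt hjlt ((p - 1) * t) h0 hD'
              apply hkj
              omega
            simp only [decide_eq_true_eq]
            omega
        · exact absurd h0 hj
    -- now compute the step for a clique vertex
    have hsucc : delta p j.1 (t + 1) = (delta p j.1 t + (p - 1)) % p :=
      delta_clique_succ hp2 hj
    by_cases hD0 : delta p j.1 t = 0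
    · have hFt : F = true := hF.mpr hD0
      have hd1 : delta p j.1 (t + 1) = p - 1 := by
        rw [hsucc, hD0, Nat.zero_add, Nat.mod_eq_of_lt (by omega)]
      rw [hFt, hdt, hd1]
      simp [show 1 ≤ p - 1 by omega]
    · have hFf : F = false := Bool.eq_false_iff.mpr (fun h => hD0 (hF.mp h))
      have hlt : delta p j.1 t < p := delta_clique_lt hp2 hj t
      have hd1 : delta p j.1 (t + 1) = delta p j.1 t - 1 := by
        rw [hsucc, (show delta p j.1 t + (p - 1) = (delta p j.1 t - 1) + p by omega),
          Nat.add_mod_right, Nat.mod_eq_of_lt (by omega)]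
      rw [hFf, hd1]
      by_cases hge : 1 ≤ delta p j.1 t - 1 <;> simp [hge]


lemma GV_connected (hne : P.Nonempty) : (GV P).Connected := by
  obtain ⟨p0, hp0⟩ := hne
  haveI : Nonempty (VT P) := ⟨⟨⟨p0, hp0⟩, ⟨0, Nat.succ_pos _⟩⟩⟩
  have reach_pend : ∀ u : VT P,
      (GV P).Reachable u ⟨u.1, ⟨0, Nat.succ_pos _⟩⟩ := by
    intro u
    obtain ⟨⟨p, hpP⟩, j⟩ := u
    have hp2 : 2 ≤ p := (hP p hpP).two_le
    by_cases h0 : j.1 = 0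
    · have he : (⟨⟨p, hpP⟩, j⟩ : VT P) = ⟨⟨p, hpP⟩, ⟨0, Nat.succ_pos _⟩⟩ :=
        sigma_eq_of h0
      rw [he]
    by_cases h1 : j.1 = 1
    · refine SimpleGraph.Adj.reachable ?_
      rw [adj_iff]
      refine ⟨fun he => ?_, Or.inl ⟨rfl, Or.inl (show j.1 + 0 = 1 by omega)⟩⟩
      have hv : j.1 = 0 := sigma_snd_eq he
      exact h0 hv
    · have hone : (1 : ℕ) < p + 1 := by omega
      have a1 : (GV P).Adj ⟨⟨p, hpP⟩, j⟩ ⟨⟨p, hpP⟩, ⟨1, hone⟩⟩ := by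
        rw [adj_iff]
        refine ⟨fun he => ?_, Or.inl ⟨rfl, Or.inr ⟨h0, show (1 : ℕ) ≠ 0 by omega⟩⟩⟩
        have hv : j.1 = 1 := sigma_snd_eq he
        exact h1 hv
      have a2 : (GV P).Adj ⟨⟨p, hpP⟩, ⟨1, hone⟩⟩ ⟨⟨p, hpP⟩, ⟨0, Nat.succ_pos _⟩⟩ := by
        rw [adj_iff]
        refine ⟨fun he => ?_, Or.inl ⟨rfl, Or.inl (show (1 : ℕ) + 0 = 1 by omega)⟩⟩
        have hv : (1 : ℕ) = 0 := sigma_snd_eq he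
        exact one_ne_zero hv
      exact a1.reachable.trans a2.reachable
  have pend_pend : ∀ a b : {x // x ∈ P},
      (GV P).Reachable ⟨a, ⟨0, Nat.succ_pos _⟩⟩ ⟨b, ⟨0, Nat.succ_pos _⟩⟩ := by
    intro a b
    by_cases hab : a = b
    · subst hab
      exact SimpleGraph.Reachable.refl _
    · refine SimpleGraph.Adj.reachable ?_
      rw [adj_iff]
      exact ⟨fun he => hab (congrArg Sigma.fst he),
        Or.inr ⟨hab, rfl, rfl⟩⟩
  constructor
  intro u v
  exact (reach_pend u).trans ((pend_pend u.1 v.1).trans (reach_pend v).symm)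

lemma iter_eq (t : ℕ) :
    (fmStep (GV P) (dtV P))^[t] (YV P 0) = YV P t := by
  induction t with
  | zero => rfl
  | succ n ih => rw [Function.iterate_succ_apply', ih, step_eq hP]

lemma YV_periodic {N : ℕ} (hdvd : ∀ p ∈ P, p ∣ N) : YV P N = YV P 0 := by
  funext u
  obtain ⟨⟨p, hpP⟩, j⟩ := u
  have hp2 : 2 ≤ p := (hP p hpP).two_le
  obtain ⟨c, hc⟩ := hdvd p hpP
  have hkey : delta p j.1 N = delta p j.1 0 := by
    by_cases hj : j.1 = 0
    · have h1 : N % p = 0 := by rw [hc, Nat.mul_mod_right]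
      rw [hj, delta_pendant, delta_pendant, h1, Nat.zero_mod]
    · rw [delta_clique hj, delta_clique hj, hc,
        show (p - 1) * (p * c) = p * ((p - 1) * c) by ring,
        Nat.add_mul_mod_self_left]
      simp
  show (decide (1 ≤ delta p j.1 N), delta p j.1 N) = (decide (1 ≤ delta p j.1 0), delta p j.1 0)
  rw [hkey]

end step

end CPPaux

open CPPaux in
/-- for every `m ≥ 2`, with `n = Σ_{p prime, p ≤ m} (p + 1)`,
there are a connected graph on `n` vertices, a maximum delay vector `dt`
(not necessarily constant, with `dtᵢ ≥ 1`) and a periodic configuration whose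
minimal period is at least `Π_{p prime, p ≤ m} p`. -/
theorem connected_primorial_period (m : ℕ) (hm : 2 ≤ m) :
    ∃ (G : SimpleGraph (Fin (∑ p ∈ (Finset.range (m + 1)).filter Nat.Prime, (p + 1))))
      (dt : Fin (∑ p ∈ (Finset.range (m + 1)).filter Nat.Prime, (p + 1)) → ℕ)
      (y : Fin (∑ p ∈ (Finset.range (m + 1)).filter Nat.Prime, (p + 1)) → Bool × ℕ),
      G.Connected ∧ (∀ i, 1 ≤ dt i) ∧
      y ∈ Function.periodicPts (fmStep G dt) ∧
      (∏ p ∈ (Finset.range (m + 1)).filter Nat.Prime, p) ≤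
        Function.minimalPeriod (fmStep G dt) y := by
  classical
  set Pf : Finset ℕ := (Finset.range (m + 1)).filter Nat.Prime with hPf
  have hP : ∀ p ∈ Pf, p.Prime := fun p hp => (Finset.mem_filter.mp hp).2
  have h2 : 2 ∈ Pf := by
    rw [hPf, Finset.mem_filter, Finset.mem_range]
    exact ⟨by omega, Nat.prime_two⟩
  have hcard : Fintype.card (VT Pf) = ∑ p ∈ Pf, (p + 1) := by
    rw [Fintype.card_sigma]
    simp only [Fintype.card_fin]
    exact Finset.sum_coe_sort Pf (fun p => p + 1)
  let e : Fin (∑ p ∈ Pf, (p + 1)) ≃ VT Pf :=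
    (finCongr hcard.symm).trans (Fintype.equivFin (VT Pf)).symm
  have hconn : (SimpleGraph.comap (⇑e) (GV Pf)).Connected := by
    have iso : (SimpleGraph.comap (⇑e) (GV Pf)) ≃g (GV Pf) := ⟨e, Iff.rfl⟩
    rw [iso.connected_iff]
    exact GV_connected hP ⟨2, h2⟩
  have hconj : ∀ Yc : VT Pf → Bool × ℕ,
      fmStep (SimpleGraph.comap (⇑e) (GV Pf)) (dtV Pf ∘ ⇑e) (Yc ∘ ⇑e) =
        (fmStep (GV Pf) (dtV Pf) Yc) ∘ ⇑e := by
    intro Yc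
    funext i
    have hc : conjNet (SimpleGraph.comap (⇑e) (GV Pf)) (fun w => ((Yc ∘ ⇑e) w).1) i
        = conjNet (GV Pf) (fun w => (Yc w).1) (e i) := by
      unfold conjNet
      have hiff : (∀ j, (SimpleGraph.comap (⇑e) (GV Pf)).Adj i j → ((Yc ∘ ⇑e) j).1 = true)
          ↔ (∀ w, (GV Pf).Adj (e i) w → (Yc w).1 = true) := by
        constructor
        · intro h w hw
          have h2' := h (e.symm w)
          rw [SimpleGraph.comap_adj, Equiv.apply_symm_apply] at h2'
          have h3' := h2' hw
          rwa [Function.comp_apply, Equiv.apply_symm_apply] at h3'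
        · intro h j hj
          rw [SimpleGraph.comap_adj] at hj
          exact h (e j) hj
      simp only [hiff]
    show fmStep (SimpleGraph.comap (⇑e) (GV Pf)) (dtV Pf ∘ ⇑e) (Yc ∘ ⇑e) i =
      fmStep (GV Pf) (dtV Pf) Yc (e i)
    rw [fmStep_apply, fmStep_apply, hc]
    rfl
  have hiter : ∀ k, (fmStep (SimpleGraph.comap (⇑e) (GV Pf)) (dtV Pf ∘ ⇑e))^[k]
      (YV Pf 0 ∘ ⇑e) = YV Pf k ∘ ⇑e := by
    intro k
    induction k with
    | zero => rfl
    | succ n ih => rw [Function.iterate_succ_apply', ih, hconj, step_eq hP]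
  have hNpos : 0 < ∏ p ∈ Pf, p := Finset.prod_pos fun p hp => (hP p hp).pos
  have hper : Function.IsPeriodicPt
      (fmStep (SimpleGraph.comap (⇑e) (GV Pf)) (dtV Pf ∘ ⇑e)) (∏ p ∈ Pf, p)
      (YV Pf 0 ∘ ⇑e) := by
    show (fmStep (SimpleGraph.comap (⇑e) (GV Pf)) (dtV Pf ∘ ⇑e))^[∏ p ∈ Pf, p]
      (YV Pf 0 ∘ ⇑e) = YV Pf 0 ∘ ⇑e
    rw [hiter, YV_periodic hP (fun p hp => Finset.dvd_prod_of_mem _ hp)]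
  have hdtpos : ∀ i, 1 ≤ (dtV Pf ∘ ⇑e) i := by
    intro i
    have hp2 : 2 ≤ ((e i).1 : ℕ) := (hP _ (e i).1.2).two_le
    show 1 ≤ dtV Pf (e i)
    unfold dtV
    split <;> omega
  refine ⟨SimpleGraph.comap (⇑e) (GV Pf), dtV Pf ∘ ⇑e, YV Pf 0 ∘ ⇑e,
    hconn, hdtpos, ⟨∏ p ∈ Pf, p, hNpos, hper⟩, ?_⟩
  set T := Function.minimalPeriod
    (fmStep (SimpleGraph.comap (⇑e) (GV Pf)) (dtV Pf ∘ ⇑e)) (YV Pf 0 ∘ ⇑e) with hTdef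
  have hTpos : 0 < T := Function.IsPeriodicPt.minimalPeriod_pos hNpos hper
  have hT : (fmStep (SimpleGraph.comap (⇑e) (GV Pf)) (dtV Pf ∘ ⇑e))^[T]
      (YV Pf 0 ∘ ⇑e) = YV Pf 0 ∘ ⇑e := Function.iterate_minimalPeriod
  rw [hiter] at hT
  have hdvd : ∀ p ∈ Pf, p ∣ T := by
    intro p hp
    have hp2 : 2 ≤ p := (hP p hp).two_le
    have hv := congrFun hT (e.symm ⟨⟨p, hp⟩, ⟨1, show (1 : ℕ) < p + 1 by omega⟩⟩)
    rw [Function.comp_apply, Function.comp_apply, Equiv.apply_symm_apply] at hv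
    have hv2 : delta p 1 T = delta p 1 0 := congrArg Prod.snd hv
    rw [delta_clique one_ne_zero, delta_clique one_ne_zero] at hv2
    norm_num at hv2
    exact prime_dvd_of_mul_pred (hP p hp) hv2
  have hproddvd : (∏ p ∈ Pf, p) ∣ T :=
    Finset.prod_primes_dvd _ (fun p hp => (hP p hp).prime) hdvd
  exact Nat.le_of_dvd hTpos hproddvd
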